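/- Let V be a finite-dimensional real vector space with a nondegenerate quadratic form q, and let h be an isometry of (V, q). Write the characteristic polynomial of h as (X − 1)^r · Q(X) with Q(1) ≠ 0. Then V is the direct sum of E₁ := ker((h − id)^r) and E_Q := ker(Q(h)); both subspaces are h-invariant; E₁ and E_Q are q-orthogonal to each other; and the restriction of q to each of E₁ and E_Q is nondegenerate. -/

import Mathlib

open Module Polynomial

/-- Let `V` be a finite-dimensional real vector space with a nondegenerate
quadratic form `q`, and `h` an isometry of `(V, q)` with characteristic polynomial
`(X - 1)^r * Q`, where `Q(1) ≠ 0`.  Then `V = E₁ ⊕ E_Q` with `E₁ = ker (h - id)^r` and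
`E_Q = ker Q(h)`; both subspaces are `h`-invariant, they are `q`-orthogonal to each other,
and the restriction of `q` to each of them is nondegenerate. -/
theorem isometry_charpoly_orthogonal_decomposition
    {V : Type*} [AddCommGroup V] [Module ℝ V] [FiniteDimensional ℝ V]
    (q : QuadraticForm ℝ V)
    (hqnd : ∀ v : V, (∀ w : V, QuadraticMap.polar q v w = 0) → v = 0)
    (h : V →ₗ[ℝ] V) (hbij : Function.Bijective h)
    (hiso : ∀ v, q (h v) = q v)
    (r : ℕ) (Q : Polynomial ℝ)
    (hchar : LinearMap.charpoly h = (X - 1) ^ r * Q)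
    (hQ1 : Q.eval 1 ≠ 0) :
    IsCompl (LinearMap.ker ((h - 1) ^ r)) (LinearMap.ker (Polynomial.aeval h Q)) ∧
    (∀ x ∈ LinearMap.ker ((h - 1) ^ r), h x ∈ LinearMap.ker ((h - 1) ^ r)) ∧
    (∀ x ∈ LinearMap.ker (Polynomial.aeval h Q),
        h x ∈ LinearMap.ker (Polynomial.aeval h Q)) ∧
    (∀ x ∈ LinearMap.ker ((h - 1) ^ r), ∀ y ∈ LinearMap.ker (Polynomial.aeval h Q),
        QuadraticMap.polar q x y = 0) ∧
    (∀ x ∈ LinearMap.ker ((h - 1) ^ r),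
        (∀ y ∈ LinearMap.ker ((h - 1) ^ r), QuadraticMap.polar q x y = 0) → x = 0) ∧
    (∀ x ∈ LinearMap.ker (Polynomial.aeval h Q),
        (∀ y ∈ LinearMap.ker (Polynomial.aeval h Q), QuadraticMap.polar q x y = 0) → x = 0) := by
  -- (h - 1)^r = aeval h ((X - 1)^r)
  have haev : (h - 1) ^ r = aeval h ((X - 1 : Polynomial ℝ) ^ r) := by simp
  -- coprimality of X - 1 with Q
  have hcop1 : IsCoprime (X - C (1 : ℝ)) Q := by
    rw [(Polynomial.irreducible_X_sub_C (1 : ℝ)).coprime_iff_not_dvd]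
    intro hdvd
    exact hQ1 (Polynomial.dvd_iff_isRoot.mp hdvd)
  have hcop : IsCoprime ((X - 1 : Polynomial ℝ) ^ r) Q := by
    rw [show (X - 1 : Polynomial ℝ) = X - C 1 by rw [Polynomial.C_1]]
    exact hcop1.pow_left
  -- the product annihilates h (Cayley–Hamilton)
  have hker_top : LinearMap.ker (aeval h ((X - 1 : Polynomial ℝ) ^ r * Q)) = ⊤ := by
    rw [← hchar, LinearMap.aeval_self_charpoly]
    exact LinearMap.ker_zero
  have hsup : LinearMap.ker ((h - 1) ^ r) ⊔ LinearMap.ker (aeval h Q) = ⊤ := by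
    rw [haev, Polynomial.sup_ker_aeval_eq_ker_aeval_mul_of_coprime h hcop, hker_top]
  have hdisj : Disjoint (LinearMap.ker ((h - 1) ^ r)) (LinearMap.ker (aeval h Q)) := by
    rw [haev]; exact Polynomial.disjoint_ker_aeval_of_isCoprime h hcop
  have hiscompl : IsCompl (LinearMap.ker ((h - 1) ^ r)) (LinearMap.ker (aeval h Q)) :=
    ⟨hdisj, codisjoint_iff.mpr hsup⟩
  -- invariance
  have hcomm1 : Commute h ((h - 1) ^ r) :=
    (((Commute.refl h).sub_right (Commute.one_right h)).pow_right r)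
  have hinv1 : ∀ x ∈ LinearMap.ker ((h - 1) ^ r), h x ∈ LinearMap.ker ((h - 1) ^ r) := by
    intro x hx
    rw [LinearMap.mem_ker] at hx ⊢
    have := congrArg (fun f : V →ₗ[ℝ] V => f x) hcomm1.eq
    simp only [Module.End.mul_apply] at this
    rw [← this, hx, map_zero]
  have hcommQ : Commute h (aeval h Q) := by
    have : Commute (aeval h X) (aeval h Q) := (Commute.all X Q).map (aeval h)
    simpa using this
  have hinvQ : ∀ x ∈ LinearMap.ker (aeval h Q), h x ∈ LinearMap.ker (aeval h Q) := by
    intro x hx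
    rw [LinearMap.mem_ker] at hx ⊢
    have := congrArg (fun f : V →ₗ[ℝ] V => f x) hcommQ.eq
    simp only [Module.End.mul_apply] at this
    rw [← this, hx, map_zero]
  -- (h - 1) is surjective on ker (aeval h Q)
  have hsurj : ∀ y ∈ LinearMap.ker (aeval h Q),
      ∃ z ∈ LinearMap.ker (aeval h Q), (h - 1) z = y := by
    intro y hy
    rw [LinearMap.mem_ker] at hy
    obtain ⟨a, b, hab⟩ := hcop1
    refine ⟨aeval h a y, ?_, ?_⟩
    · rw [LinearMap.mem_ker]
      have : aeval h Q (aeval h a y) = aeval h a (aeval h Q y) := by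
        rw [← Module.End.mul_apply, ← Module.End.mul_apply, ← map_mul, ← map_mul, mul_comm]
      rw [this, hy, map_zero]
    · have h1 : aeval h (a * (X - C 1) + b * Q) y = y := by rw [hab]; simp
      have h2 : aeval h (b * Q) y = 0 := by
        rw [map_mul, Module.End.mul_apply, hy, map_zero]
      have h3 : aeval h (a * (X - C 1)) y = y := by
        rw [map_add, LinearMap.add_apply, h2, add_zero] at h1
        exact h1
      calc (h - 1) (aeval h a y) = aeval h ((X - C 1) * a) y := by
            rw [map_mul, Module.End.mul_apply]
            simp
        _ = y := by rw [mul_comm]; exact h3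
  -- polar form is h-invariant
  have hpolar : ∀ x y : V, QuadraticMap.polar q (h x) (h y) = QuadraticMap.polar q x y := by
    intro x y
    simp only [QuadraticMap.polar, ← map_add, hiso]
  -- the key orthogonality induction
  have key : ∀ k : ℕ, ∀ x : V, ((h - 1) ^ k) x = 0 →
      ∀ y ∈ LinearMap.ker (aeval h Q), QuadraticMap.polar q x y = 0 := by
    intro k
    induction k with
    | zero =>
      intro x hx y _
      rw [pow_zero, Module.End.one_apply] at hx
      rw [hx]
      exact QuadraticMap.polar_zero_left q y
    | succ k ih =>
      intro x hx y hy
      obtain ⟨z, hz, hzy⟩ := hsurj y hy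
      -- x' with h x' = x
      obtain ⟨x', hx'⟩ := hbij.surjective x
      -- (h-1)^k (x' - x) = 0
      have hstep : ((h - 1) ^ k) (x' - x) = 0 := by
        apply hbij.injective
        have hc : Commute h ((h - 1) ^ k) :=
          (((Commute.refl h).sub_right (Commute.one_right h)).pow_right k)
        have hcx := congrArg (fun f : V →ₗ[ℝ] V => f (x' - x)) hc.eq
        simp only [Module.End.mul_apply] at hcx
        rw [hcx, map_zero]
        have : h (x' - x) = -((h - 1) x) := by
          simp [hx', map_sub]
        rw [this, map_neg]
        have : ((h - 1) ^ k) ((h - 1) x) = ((h - 1) ^ (k + 1)) x := by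
          rw [pow_succ, Module.End.mul_apply]
        rw [this, hx, neg_zero]
      have hih := ih (x' - x) hstep z hz
      have hx'z : QuadraticMap.polar q x (h z) = QuadraticMap.polar q x' z := by
        rw [← hpolar x' z, hx']
      calc QuadraticMap.polar q x y
          = QuadraticMap.polar q x ((h - 1) z) := by rw [hzy]
        _ = QuadraticMap.polar q x (h z - z) := by
            simp [LinearMap.sub_apply]
        _ = QuadraticMap.polar q x (h z) - QuadraticMap.polar q x z :=
            QuadraticMap.polar_sub_right q x (h z) z
        _ = QuadraticMap.polar q x' z - QuadraticMap.polar q x z := by rw [hx'z]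
        _ = QuadraticMap.polar q (x' - x) z := (QuadraticMap.polar_sub_left q x' x z).symm
        _ = 0 := hih
  have hortho : ∀ x ∈ LinearMap.ker ((h - 1) ^ r), ∀ y ∈ LinearMap.ker (aeval h Q),
      QuadraticMap.polar q x y = 0 := by
    intro x hx y hy
    exact key r x (LinearMap.mem_ker.mp hx) y hy
  -- nondegeneracy on E₁
  have hnd1 : ∀ x ∈ LinearMap.ker ((h - 1) ^ r),
      (∀ y ∈ LinearMap.ker ((h - 1) ^ r), QuadraticMap.polar q x y = 0) → x = 0 := by
    intro x hx hxy
    apply hqnd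
    intro w
    have hw : w ∈ LinearMap.ker ((h - 1) ^ r) ⊔ LinearMap.ker (aeval h Q) := by
      rw [hsup]; trivial
    obtain ⟨a, ha, b, hb, hab⟩ := Submodule.mem_sup.mp hw
    rw [← hab, QuadraticMap.polar_add_right, hxy a ha, hortho x hx b hb, add_zero]
  -- nondegeneracy on E_Q
  have hndQ : ∀ x ∈ LinearMap.ker (aeval h Q),
      (∀ y ∈ LinearMap.ker (aeval h Q), QuadraticMap.polar q x y = 0) → x = 0 := by
    intro x hx hxy
    apply hqnd
    intro w
    have hw : w ∈ LinearMap.ker ((h - 1) ^ r) ⊔ LinearMap.ker (aeval h Q) := by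
      rw [hsup]; trivial
    obtain ⟨a, ha, b, hb, hab⟩ := Submodule.mem_sup.mp hw
    have h1 : QuadraticMap.polar q x a = 0 := by
      rw [QuadraticMap.polar_comm]
      exact hortho a ha x hx
    rw [← hab, QuadraticMap.polar_add_right, h1, hxy b hb, add_zero]
  exact ⟨hiscompl, hinv1, hinvQ, hortho, hnd1, hndQ⟩
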